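/- A Boolean frame (complete Boolean algebra viewed as a frame) is two-valued (has exactly the elements ⊥ and ⊤, with ⊥ ≠ ⊤) if and only if it has no proper nontrivial nucleus: every nucleus on it is either the identity or the constant-⊤ nucleus. Equivalently, two-valued Boolean frames are atoms in the lattice of sublocales of any frame containing them as a sublocale quotient. -/
import Mathlib


/-- A Boolean frame (complete Boolean algebra viewed as a frame) is two-valued (its only
elements are `⊥` and `⊤`, which are distinct) if and only if it is nondegenerate and
every nucleus on it is either the identity or the constant-`⊤` nucleus (the latter
having the degenerate one-element frame of fixed points). -/
theorem stmt9 {L : Type*} [CompleteBooleanAlgebra L] :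
    ((∀ x : L, x = ⊥ ∨ x = ⊤) ∧ (⊥ : L) ≠ ⊤) ↔
    ((⊥ : L) ≠ ⊤ ∧
      ∀ k : L → L,
        (∀ x : L, x ≤ k x) → (∀ x : L, k (k x) = k x) →
        (∀ x y : L, k (x ⊓ y) = k x ⊓ k y) →
        (∀ x : L, k x = x) ∨ (∀ x : L, k x = ⊤)) := by
  constructor
  · rintro ⟨h2, hne⟩
    refine ⟨hne, fun k hinf _ hmin => ?_⟩
    rcases h2 (k ⊥) with hb | hb
    · left
      intro x
      rcases h2 x with rfl | rfl
      · exact hb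
      · exact le_antisymm le_top (hinf ⊤)
    · right
      intro x
      have : k ⊥ ≤ k x := by
        have := hmin ⊥ x
        simp at this
        exact this
      rw [hb] at this
      exact le_antisymm le_top this
  · rintro ⟨hne, hk⟩
    refine ⟨fun a => ?_, hne⟩
    have := hk (fun x => a ⊔ x) (fun x => le_sup_right)
      (fun x => by simp) (fun x y => sup_inf_left a x y)
    rcases this with h | h
    · left
      have := h ⊥
      simpa using this
    · right
      have := h ⊥
      simpa using this
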